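/- Let k, l ≥ 2 be integers and let p be a prime. Then ν_p((k!)^l · l!) ≤ ν_p((kl)!), and equality holds if and only if at least one of the following holds: (a) k is a power of p; (b) s_p(kl) = l · s_p(k), i.e., there are no carry operations in the l-term addition k + ⋯ + k when k is written in base p. -/

import Mathlib

open Nat Finset

section Aux
variable {p : ℕ} [hp : Fact p.Prime]

private lemma fact_int (n : ℕ) :
    ((p:ℤ) - 1) * padicValNat p (n !) = (n : ℤ) - ((p.digits n).sum : ℤ) := by
  have h := sub_one_mul_padicValNat_factorial (p := p) n
  have hle := Nat.digit_sum_le p n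
  have hp1 : 1 ≤ p := hp.out.one_lt.le
  have h2 : ((p - 1 : ℕ) : ℤ) * (padicValNat p n ! : ℤ) = ((n - (p.digits n).sum : ℕ) : ℤ) := by
    exact_mod_cast congrArg (Nat.cast : ℕ → ℤ) h
  rw [Nat.cast_sub hle, Nat.cast_sub hp1] at h2
  simp only [Nat.cast_one] at h2
  exact h2

private lemma carry (a b : ℕ) :
    ((p.digits (a + b)).sum : ℤ) + ((p:ℤ) - 1) * padicValNat p ((a + b).choose b)
      = ((p.digits a).sum : ℤ) + ((p.digits b).sum : ℤ) := by
  have hmul : padicValNat p ((a + b)!) =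
      padicValNat p ((a + b).choose b) + padicValNat p (a !) + padicValNat p (b !) := by
    rw [← Nat.add_choose_mul_factorial_mul_factorial a b,
        padicValNat.mul (mul_ne_zero (Nat.choose_pos (Nat.le_add_left b a)).ne'
          (factorial_ne_zero a)) (factorial_ne_zero b),
        padicValNat.mul (Nat.choose_pos (Nat.le_add_left b a)).ne' (factorial_ne_zero a)]
  have h1 := fact_int (p := p) (a + b)
  have h2 := fact_int (p := p) a
  have h3 := fact_int (p := p) b
  have hc : ((padicValNat p ((a+b)!)) : ℤ) =
      (padicValNat p ((a + b).choose b) : ℤ) + padicValNat p (a !) + padicValNat p (b !) := by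
    exact_mod_cast congrArg (Nat.cast : ℕ → ℤ) hmul
  rw [Nat.cast_add] at h1
  linear_combination h1 - h2 - h3 - ((p:ℤ) - 1) * hc

end Aux

section Aux2
variable {p : ℕ} [hp : Fact p.Prime]

private lemma vC {k j : ℕ} (hk : 1 ≤ k) (hj : 1 ≤ j) :
    padicValNat p ((k * j).choose k) =
      padicValNat p j + padicValNat p ((k * j - 1).choose (k - 1)) := by
  have hkj : 1 ≤ k * j := Nat.one_le_iff_ne_zero.mpr (by positivity)
  have hid := Nat.add_one_mul_choose_eq (k * j - 1) (k - 1)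
  simp only [Nat.succ_eq_add_one, Nat.sub_add_cancel hkj, Nat.sub_add_cancel hk] at hid
  have hne1 : (k * j - 1).choose (k - 1) ≠ 0 :=
    (Nat.choose_pos (Nat.sub_le_sub_right (Nat.le_mul_of_pos_right k hj) 1)).ne'
  have hne2 : (k * j).choose k ≠ 0 :=
    (Nat.choose_pos (Nat.le_mul_of_pos_right k hj)).ne'
  have h1 : padicValNat p (k * j) + padicValNat p ((k * j - 1).choose (k - 1)) =
      padicValNat p ((k * j).choose k) + padicValNat p k := by
    rw [← padicValNat.mul (by positivity) hne1, ← padicValNat.mul hne2 (by omega), hid]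
  rw [padicValNat.mul (by omega) (by omega)] at h1
  omega

private lemma sum_digits_mul_base (m : ℕ) : (p.digits (p * m)).sum = (p.digits m).sum := by
  rcases Nat.eq_zero_or_pos m with rfl | hm
  · simp
  · rw [Nat.digits_def' hp.out.one_lt (Nat.mul_pos hp.out.pos hm)]
    simp [Nat.mul_div_cancel_left _ hp.out.pos, Nat.mul_mod_right]

private lemma sum_digits_pow_mul (i m : ℕ) :
    (p.digits (p ^ i * m)).sum = (p.digits m).sum := by
  induction i with
  | zero => simp
  | succ n ih => rw [pow_succ, mul_comm (p ^ n) p, mul_assoc, sum_digits_mul_base, ih]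

omit hp in
private lemma sumdig_pos {k : ℕ} (hk : k ≠ 0) : 0 < (p.digits k).sum := by
  have h1 : p.digits k ≠ [] := Nat.digits_ne_nil_iff_ne_zero.mpr hk
  have h2 := Nat.getLast_digit_ne_zero p hk
  have h3 := List.single_le_sum (fun x _ => Nat.zero_le x) _ (List.getLast_mem h1)
  omega

private lemma sumdig_one : (p.digits 1).sum = 1 := by
  rw [Nat.digits_def' hp.out.one_lt Nat.one_pos, Nat.mod_eq_of_lt hp.out.one_lt,
    Nat.div_eq_of_lt hp.out.one_lt]
  simp

private lemma sumdig_eq_one {k : ℕ} (hk : k ≠ 0) (h : (p.digits k).sum = 1) :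
    ∃ i, k = p ^ i := by
  induction k using Nat.strong_induction_on with
  | _ k ih =>
    have hp1 := hp.out.one_lt
    rw [Nat.digits_def' hp1 (Nat.pos_of_ne_zero hk)] at h
    simp only [List.sum_cons] at h
    rcases Nat.eq_zero_or_pos (k / p) with hq | hq
    · simp [hq] at h
      have h2 := Nat.mod_add_div k p
      have h3 : p * (k / p) = 0 := by rw [hq, mul_zero]
      exact ⟨0, by rw [pow_zero]; omega⟩
    · have hS := sumdig_pos (p := p) hq.ne'
      have hmod : k % p = 0 := by omega
      obtain ⟨i, hi⟩ := ih (k / p) (Nat.div_lt_self (Nat.pos_of_ne_zero hk) hp1)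
        hq.ne' (by omega)
      exact ⟨i + 1, by
        rw [pow_succ, ← hi]
        exact (Nat.div_mul_cancel (Nat.dvd_of_mod_eq_zero hmod)).symm⟩

end Aux2

section Tele
variable {p : ℕ} [hp : Fact p.Prime]

private lemma tele {k : ℕ} (hk : 1 ≤ k) {j : ℕ} (hj : 1 ≤ j) :
    ((j : ℤ) * ((p.digits k).sum : ℤ) + ((p.digits j).sum : ℤ)
        - ((p.digits (k * j)).sum : ℤ) - (j : ℤ)
      = ((p:ℤ) - 1) * ∑ i ∈ Finset.Icc 2 j, (padicValNat p ((k * i - 1).choose (k - 1)) : ℤ))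
    ∧ ((j : ℤ) * ((p.digits k).sum : ℤ) - ((p.digits (k * j)).sum : ℤ)
      = ((p:ℤ) - 1) * ∑ i ∈ Finset.Icc 2 j,
          ((padicValNat p i : ℤ) + (padicValNat p ((k * i - 1).choose (k - 1)) : ℤ))) := by
  induction j, hj using Nat.le_induction with
  | base =>
    rw [show Finset.Icc 2 1 = (∅ : Finset ℕ) by decide]
    simp [sumdig_one]
  | succ j hj ih =>
    obtain ⟨ih1, ih2⟩ := ih
    have hcar := carry (p := p) (k * j) k
    have hcar2 := carry (p := p) j 1
    have hvc := vC (p := p) hk (by omega : 1 ≤ j + 1)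
    rw [Nat.choose_one_right, sumdig_one] at hcar2
    have hmul : k * j + k = k * (j + 1) := by ring
    rw [hmul] at hcar
    have hvc' : (padicValNat p ((k * (j+1)).choose k) : ℤ)
        = (padicValNat p (j+1) : ℤ) + (padicValNat p ((k * (j+1) - 1).choose (k - 1)) : ℤ) := by
      exact_mod_cast congrArg (Nat.cast : ℕ → ℤ) hvc
    have hj1 : ((j + 1 : ℕ) : ℤ) = (j : ℤ) + 1 := by exact_mod_cast rfl
    rw [Finset.sum_Icc_succ_top (by omega : 2 ≤ j + 1),
        Finset.sum_Icc_succ_top (by omega : 2 ≤ j + 1)]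
    constructor
    · linear_combination ih1 + (((p.digits k).sum : ℤ) - 1) * hj1 + hcar2 - hcar
        + ((p:ℤ) - 1) * hvc'
    · linear_combination ih2 + ((p.digits k).sum : ℤ) * hj1 - hcar + ((p:ℤ) - 1) * hvc'

end Tele

theorem padicValNat_wreath_le_and_equality_iff
    (k l : ℕ) (hk : 2 ≤ k) (hl : 2 ≤ l) (p : ℕ) (hp : p.Prime) :
    padicValNat p ((Nat.factorial k) ^ l * Nat.factorial l) ≤ padicValNat p (Nat.factorial (k * l)) ∧
    (padicValNat p ((Nat.factorial k) ^ l * Nat.factorial l) = padicValNat p (Nat.factorial (k * l))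
      ↔ (∃ i : ℕ, k = p ^ i) ∨ (Nat.digits p (k * l)).sum = l * (Nat.digits p k).sum) := by
  haveI F : Fact p.Prime := ⟨hp⟩
  have hk1 : 1 ≤ k := by omega
  have hl1 : 1 ≤ l := by omega
  have h0ne : ((p:ℤ) - 1) ≠ 0 := by
    have := hp.one_lt; have : (1:ℤ) < p := by exact_mod_cast this
    linarith
  have hL : padicValNat p ((k)! ^ l * (l)!)
      = l * padicValNat p (k)! + padicValNat p (l)! := by
    rw [padicValNat.mul (pow_ne_zero _ (Nat.factorial_ne_zero k)) (Nat.factorial_ne_zero l),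
        padicValNat.pow]
  obtain ⟨T1, T2⟩ := tele (p := p) hk1 hl1
  have hfk := fact_int (p := p) k
  have hfl := fact_int (p := p) l
  have hfkl := fact_int (p := p) (k * l)
  have hklc : ((k * l : ℕ) : ℤ) = (k : ℤ) * l := by exact_mod_cast rfl
  have hAB : (padicValNat p ((k * l)!) : ℤ)
      - ((l : ℤ) * (padicValNat p (k)! : ℤ) + (padicValNat p (l)! : ℤ))
      = ∑ i ∈ Finset.Icc 2 l, (padicValNat p ((k * i - 1).choose (k - 1)) : ℤ) := by
    apply mul_left_cancel₀ h0ne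
    linear_combination hfkl - (l:ℤ) * hfk - hfl + T1 + hklc
  have hScnn : (0:ℤ) ≤ ∑ i ∈ Finset.Icc 2 l,
      (padicValNat p ((k * i - 1).choose (k - 1)) : ℤ) :=
    Finset.sum_nonneg fun i _ => by positivity
  have heqofSc : (∑ i ∈ Finset.Icc 2 l, (padicValNat p ((k * i - 1).choose (k - 1)) : ℤ)) = 0 →
      l * padicValNat p (k)! + padicValNat p (l)! = padicValNat p ((k * l)!) := by
    intro h0
    rw [h0] at hAB
    have : (l : ℤ) * (padicValNat p (k)! : ℤ) + (padicValNat p (l)! : ℤ)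
        = (padicValNat p ((k * l)!) : ℤ) := by linarith
    exact_mod_cast this
  rw [hL]
  constructor
  · -- inequality
    have : (l : ℤ) * (padicValNat p (k)! : ℤ) + (padicValNat p (l)! : ℤ)
        ≤ (padicValNat p ((k * l)!) : ℤ) := by linarith
    exact_mod_cast this
  constructor
  · -- equality → conditions
    intro heq
    have heqZ : (l : ℤ) * (padicValNat p (k)! : ℤ) + (padicValNat p (l)! : ℤ)
        = (padicValNat p ((k * l)!) : ℤ) := by exact_mod_cast heq
    have hSc0 : (∑ i ∈ Finset.Icc 2 l,
        (padicValNat p ((k * i - 1).choose (k - 1)) : ℤ)) = 0 := by linarith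
    have hall : ∀ i ∈ Finset.Icc 2 l, padicValNat p ((k * i - 1).choose (k - 1)) = 0 := by
      intro i hi
      have := (Finset.sum_eq_zero_iff_of_nonneg (fun i _ => by positivity)).mp hSc0 i hi
      exact_mod_cast this
    by_cases hpow : ∃ i : ℕ, k = p ^ i
    · exact Or.inl hpow
    right
    have hSk2 : 2 ≤ (p.digits k).sum := by
      have h1 := sumdig_pos (p := p) (show k ≠ 0 by omega)
      rcases Nat.lt_or_ge (p.digits k).sum 2 with h | h
      · have : (p.digits k).sum = 1 := by omega
        exact absurd (sumdig_eq_one (show k ≠ 0 by omega) this) hpow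
      · exact h
    have hp2 : 2 ≤ p := hp.two_le
    have hlp : l < p := by
      by_contra hge
      push_neg at hge
      obtain ⟨U1, U2⟩ := tele (p := p) hk1 (show 1 ≤ p - 1 by omega)
      have hz : ∀ i ∈ Finset.Icc 2 (p - 1),
          ((padicValNat p i : ℤ) + (padicValNat p ((k * i - 1).choose (k - 1)) : ℤ)) = 0 := by
        intro i hi
        rw [Finset.mem_Icc] at hi
        have h1 : padicValNat p i = 0 := padicValNat.eq_zero_of_not_dvd
          (fun hd => absurd (Nat.le_of_dvd (by omega) hd) (by omega))
        have h2 : padicValNat p ((k * i - 1).choose (k - 1)) = 0 :=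
          hall i (Finset.mem_Icc.mpr ⟨hi.1, by omega⟩)
        rw [h1, h2]; norm_num
      rw [Finset.sum_eq_zero hz, mul_zero] at U2
      have hc1 : ((p - 1 : ℕ) : ℤ) = (p : ℤ) - 1 := by
        rw [Nat.cast_sub (by omega : 1 ≤ p)]; norm_num
      rw [hc1] at U2
      have hcar3 := carry (p := p) (k * (p - 1)) k
      have hmul3 : k * (p - 1) + k = k * p := by
        have h9 : p - 1 + 1 = p := by omega
        have h10 : k * (p - 1 + 1) = k * (p - 1) + k := by rw [Nat.mul_add, Nat.mul_one]
        rw [h9] at h10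
        omega
      rw [hmul3] at hcar3
      have hskp : (p.digits (k * p)).sum = (p.digits k).sum := by
        rw [mul_comm]; exact sum_digits_mul_base k
      rw [hskp] at hcar3
      have hvp := vC (p := p) hk1 (show 1 ≤ p by omega)
      have hcp : padicValNat p ((k * p - 1).choose (k - 1)) = 0 :=
        hall p (Finset.mem_Icc.mpr ⟨hp2, hge⟩)
      rw [padicValNat.self hp.one_lt, hcp] at hvp
      have h9 : ((padicValNat p ((k * p).choose k)) : ℤ) = 1 := by exact_mod_cast hvp
      rw [h9] at hcar3
      have hA : ((p:ℤ) - 1) * ((p.digits k).sum : ℤ) = ((p:ℤ) - 1) * 1 := by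
        linarith [hcar3, U2]
      have hA2 : ((p.digits k).sum : ℤ) = 1 := mul_left_cancel₀ h0ne hA
      have : (p.digits k).sum = 1 := by exact_mod_cast hA2
      omega
    have hz2 : ∀ i ∈ Finset.Icc 2 l,
        ((padicValNat p i : ℤ) + (padicValNat p ((k * i - 1).choose (k - 1)) : ℤ)) = 0 := by
      intro i hi
      rw [Finset.mem_Icc] at hi
      have h1 : padicValNat p i = 0 := padicValNat.eq_zero_of_not_dvd
        (fun hd => absurd (Nat.le_of_dvd (by omega) hd) (by omega))
      have h2 : padicValNat p ((k * i - 1).choose (k - 1)) = 0 :=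
        hall i (Finset.mem_Icc.mpr ⟨hi.1, hi.2⟩)
      rw [h1, h2]; norm_num
    rw [Finset.sum_eq_zero hz2, mul_zero] at T2
    have : ((p.digits (k * l)).sum : ℤ) = (l : ℤ) * ((p.digits k).sum : ℤ) := by linarith
    exact_mod_cast this
  · -- conditions → equality
    rintro (⟨i, rfl⟩ | hb)
    · -- k = p ^ i
      have e1 : (p.digits (p ^ i)).sum = 1 := by
        have h := sum_digits_pow_mul (p := p) i 1
        rw [mul_one] at h
        rw [h, sumdig_one]
      have e2 : (p.digits (p ^ i * l)).sum = (p.digits l).sum := sum_digits_pow_mul i l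
      rw [e1, e2] at T1
      have hSc0 : (∑ j ∈ Finset.Icc 2 l,
          (padicValNat p ((p ^ i * j - 1).choose (p ^ i - 1)) : ℤ)) = 0 := by
        apply mul_left_cancel₀ h0ne
        rw [mul_zero, ← T1]
        push_cast
        ring
      exact heqofSc hSc0
    · -- no carries
      have hbZ : ((p.digits (k * l)).sum : ℤ) = (l : ℤ) * ((p.digits k).sum : ℤ) := by
        exact_mod_cast hb
      have hSv0 : (∑ i ∈ Finset.Icc 2 l,
          ((padicValNat p i : ℤ) + (padicValNat p ((k * i - 1).choose (k - 1)) : ℤ))) = 0 := by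
        apply mul_left_cancel₀ h0ne
        rw [mul_zero, ← T2]
        linarith
      have hle : (∑ i ∈ Finset.Icc 2 l, (padicValNat p ((k * i - 1).choose (k - 1)) : ℤ))
          ≤ ∑ i ∈ Finset.Icc 2 l,
            ((padicValNat p i : ℤ) + (padicValNat p ((k * i - 1).choose (k - 1)) : ℤ)) :=
        Finset.sum_le_sum fun i _ => le_add_of_nonneg_left (by positivity)
      exact heqofSc (le_antisymm (by linarith) hScnn)
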